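/- arXiv:2505.05462 — 4 statements merged into one kernel-verified Lean document; each statement's English description precedes it below -/
import Mathlib

section
/- Let (V; η_1,…,η_k; ω_1,…,ω_k) be a k-contact structure on a finite-dimensional real vector space V. Then there exists a unique family of vectors R_1,…,R_k ∈ V (the Reeb vectors) such that η_α(R_β) = δ_{αβ} and ω_α(R_β, w) = 0 for all w ∈ V and all α, β ∈ {1,…,k}. Moreover, R_1,…,R_k are linearly independent and span the joint radical ⋂_{α=1}^k rad ω_α. -/
open Module

/-- A `k`-contact structure on a real vector space `V`: a family of linear functionals
`η α : V →ₗ[ℝ] ℝ` and alternating bilinear forms `ω α : V →ₗ[ℝ] V →ₗ[ℝ] ℝ` such that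
(1) `⋂ α, ker (η α)` has codimension `k` in `V`;
(2) the joint radical `⋂ α, rad (ω α)` (where `rad ω = ker ω`) has dimension `k`;
(3) the two intersect trivially. -/
def IsKContactStruct {V : Type*} [AddCommGroup V] [Module ℝ V] {k : ℕ}
    (η : Fin k → (V →ₗ[ℝ] ℝ)) (ω : Fin k → (V →ₗ[ℝ] V →ₗ[ℝ] ℝ)) : Prop :=
  (∀ α (v : V), ω α v v = 0) ∧
  finrank ℝ ↥(⨅ α, LinearMap.ker (η α)) + k = finrank ℝ V ∧
  finrank ℝ ↥(⨅ α, LinearMap.ker (ω α)) = k ∧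
  (⨅ α, LinearMap.ker (η α)) ⊓ (⨅ α, LinearMap.ker (ω α)) = ⊥

/-- **Reeb vectors of a `k`-contact vector space.**  For any `k`-contact structure
`(V; η₁, …, η_k; ω₁, …, ω_k)` on a finite-dimensional real vector space `V` there is a
unique family of vectors `R₁, …, R_k ∈ V` with `η α (R β) = δ_{αβ}` and `ω α (R β, w) = 0`
for all `w`; moreover any such family is linearly independent and spans the joint radical
`⋂ α, rad (ω α)`. -/
theorem reeb_vectors_of_kContact
    {V : Type*} [AddCommGroup V] [Module ℝ V] [FiniteDimensional ℝ V] {k : ℕ}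
    (η : Fin k → (V →ₗ[ℝ] ℝ)) (ω : Fin k → (V →ₗ[ℝ] V →ₗ[ℝ] ℝ))
    (h : IsKContactStruct η ω) :
    (∃! R : Fin k → V,
      (∀ α β, η α (R β) = if α = β then 1 else 0) ∧
      (∀ α β (w : V), ω α (R β) w = 0)) ∧
    ∀ R : Fin k → V,
      ((∀ α β, η α (R β) = if α = β then 1 else 0) ∧
        (∀ α β (w : V), ω α (R β) w = 0)) →
      LinearIndependent ℝ R ∧
        Submodule.span ℝ (Set.range R) = ⨅ α, LinearMap.ker (ω α) := by
  obtain ⟨halt, hcod, hdim, htriv⟩ := h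
  set K := ⨅ α, LinearMap.ker (η α) with hK
  set W := ⨅ α, LinearMap.ker (ω α) with hW
  -- membership in W
  have memW : ∀ (v : V), (∀ α (w : V), ω α v w = 0) → v ∈ W := by
    intro v hv
    show v ∈ ⨅ α, LinearMap.ker (ω α)
    simp only [Submodule.mem_iInf, LinearMap.mem_ker]
    intro α
    exact LinearMap.ext (hv α)
  have Wmem : ∀ (x : W) (α : Fin k) (w : V), ω α (x : V) w = 0 := by
    intro x α w
    have hx : (x : V) ∈ ⨅ α, LinearMap.ker (ω α) := x.2
    simp only [Submodule.mem_iInf, LinearMap.mem_ker] at hx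
    simpa using DFunLike.congr_fun (hx α) w
  -- the comparison map
  let Φ : W →ₗ[ℝ] (Fin k → ℝ) := LinearMap.pi (fun α => (η α).comp W.subtype)
  have hΦ : ∀ (x : W) (α : Fin k), Φ x α = η α (x : V) := fun _ _ => rfl
  have hinj : Function.Injective Φ := by
    rw [← LinearMap.ker_eq_bot]
    ext x
    simp only [LinearMap.mem_ker, Submodule.mem_bot]
    constructor
    · intro hx
      have hxK : (x : V) ∈ K := by
        rw [hK]
        simp only [Submodule.mem_iInf, LinearMap.mem_ker]
        intro α
        have := congrFun hx α
        simpa [hΦ] using this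
      have hm : (x : V) ∈ K ⊓ W := ⟨hxK, x.2⟩
      rw [htriv] at hm
      exact Subtype.ext hm
    · rintro rfl; simp
  have hfin : finrank ℝ W = finrank ℝ (Fin k → ℝ) := by
    rw [hdim]; simp
  let e : W ≃ₗ[ℝ] (Fin k → ℝ) := Φ.linearEquivOfInjective hinj hfin
  have he : ∀ x, e x = Φ x := fun x => Φ.linearEquivOfInjective_apply hinj hfin x
  -- the Reeb vectors
  let R : Fin k → V := fun β => (e.symm (Pi.single β 1) : V)
  have hRW : ∀ β, R β ∈ W := fun β => (e.symm (Pi.single β 1)).2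
  have hchar : ∀ (R' : Fin k → V),
      ((∀ α β, η α (R' β) = if α = β then 1 else 0) ∧
        (∀ α β (w : V), ω α (R' β) w = 0)) → R' = R := by
    intro R' ⟨h1, h2⟩
    funext β
    have hmem : R' β ∈ W := memW _ (fun α w => h2 α β w)
    have : e ⟨R' β, hmem⟩ = Pi.single β 1 := by
      funext α
      rw [he, hΦ]
      simp [h1 α β, Pi.single_apply, eq_comm]
    have := congrArg e.symm this
    rw [e.symm_apply_apply] at this
    exact congrArg Subtype.val this
  have hRprop : (∀ α β, η α (R β) = if α = β then 1 else 0) ∧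
      (∀ α β (w : V), ω α (R β) w = 0) := by
    constructor
    · intro α β
      have h0 : Φ (e.symm (Pi.single β 1)) = Pi.single β 1 := by
        rw [← he, e.apply_symm_apply]
      have h1 := congrFun h0 α
      rw [hΦ] at h1
      rw [show R β = ((e.symm (Pi.single β 1) : W) : V) from rfl, h1]
      simp [Pi.single_apply, eq_comm]
    · intro α β w
      exact Wmem ⟨R β, hRW β⟩ α w
  constructor
  · exact ⟨R, hRprop, hchar⟩
  · intro R' hR'
    have hli : LinearIndependent ℝ R' := by
      rw [Fintype.linearIndependent_iff]
      intro g hg α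
      have := congrArg (η α) hg
      simp only [map_sum, map_smul, map_zero] at this
      rw [Finset.sum_eq_single α] at this
      · simpa [hR'.1 α α] using this
      · intro b _ hb
        simp [hR'.1 α b, Ne.symm hb]
      · simp
    refine ⟨hli, ?_⟩
    have hle : Submodule.span ℝ (Set.range R') ≤ W := by
      rw [Submodule.span_le]
      rintro _ ⟨β, rfl⟩
      exact memW _ (fun α w => hR'.2 α β w)
    refine Submodule.eq_of_le_of_finrank_le hle ?_
    rw [hdim, finrank_span_eq_card hli]
    simp
end

section
/- Let (V; η_1,…,η_k; ω_1,…,ω_k) be a k-contact structure on a finite-dimensional real vector space V, with Reeb vectors R_1,…,R_k (the unique vectors satisfying η_α(R_β) = δ_{αβ} and ω_α(R_β,·) = 0). Let T ⊆ V be a subspace containing all R_β, and set D := {t ∈ T : η_α(t) = 0 for all α, and ω_α(t,t') = 0 for all t' ∈ T and all α}. Then D = T ∩ T^{⊥k} ∩ ⋂_{α=1}^k ker η_α; the restrictions of the η_α and ω_α to T descend to well-defined linear functionals η̄_α and alternating bilinear forms ω̄_α on the quotient Q := T/D; the data (Q; η̄_1,…,η̄_k; ω̄_1,…,ω̄_k)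 is a k-contact structure on Q; and the classes [R_1],…,[R_k] are its Reeb vectors. -/
open Module

/-- The `k`-orthogonal `W^{⊥k} = {v : V | ω α (w, v) = 0 for all w ∈ W and all α}`
of a subspace `W` with respect to the family of bilinear forms `ω`. -/
def kOrth {V : Type*} [AddCommGroup V] [Module ℝ V] {k : ℕ}
    (ω : Fin k → (V →ₗ[ℝ] V →ₗ[ℝ] ℝ)) (W : Submodule ℝ V) : Submodule ℝ V where
  carrier := {v | ∀ w ∈ W, ∀ α, ω α w v = 0}
  zero_mem' := fun w _ α => map_zero (ω α w)
  add_mem' := by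
    intro a b ha hb w hw α
    rw [map_add, ha w hw α, hb w hw α, add_zero]
  smul_mem' := by
    intro c a ha w hw α
    rw [map_smul, ha w hw α, smul_zero]

/-- The subspace `D = {t ∈ T : η α t = 0 for all α, and ω α (t, t') = 0 for all t' ∈ T, α}`,
regarded as a subspace of `T`. -/
noncomputable def reducedD {V : Type*} [AddCommGroup V] [Module ℝ V] {k : ℕ}
    (η : Fin k → (V →ₗ[ℝ] ℝ)) (ω : Fin k → (V →ₗ[ℝ] V →ₗ[ℝ] ℝ))
    (T : Submodule ℝ V) : Submodule ℝ ↥T :=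
  (⨅ α, LinearMap.ker ((η α).comp T.subtype)) ⊓
    (⨅ α, LinearMap.ker ((ω α).compl₁₂ T.subtype T.subtype))

lemma alt_skew {V : Type*} [AddCommGroup V] [Module ℝ V]
    (ω : V →ₗ[ℝ] V →ₗ[ℝ] ℝ) (h : ∀ v, ω v v = 0) (x y : V) : ω x y = - ω y x := by
  have h2 := h (x + y)
  simp only [map_add, LinearMap.add_apply, h x, h y] at h2
  linarith

lemma mem_kOrth {V : Type*} [AddCommGroup V] [Module ℝ V] {k : ℕ}
    (ω : Fin k → (V →ₗ[ℝ] V →ₗ[ℝ] ℝ)) (W : Submodule ℝ V) (v : V) :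
    v ∈ kOrth ω W ↔ ∀ w ∈ W, ∀ α, ω α w v = 0 := Iff.rfl

set_option maxHeartbeats 2000000 in
/-- **`k`-contact reduction by a subspace containing the Reeb vectors.**
If `T` is a subspace of a `k`-contact vector space containing the Reeb vectors `R β`, and
`D = {t ∈ T : η α t = 0 ∀α, ω α (t, t') = 0 ∀ t' ∈ T ∀α}`, then
`D = T ⊓ T^{⊥k} ⊓ ⋂ ker (η α)`, the `η α` and `ω α` descend to the quotient `T ⧸ D`,
the descended data is a `k`-contact structure, and the classes of the `R β` are its Reeb
vectors. -/
theorem kContact_reduction_by_subspace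
    {V : Type*} [AddCommGroup V] [Module ℝ V] [FiniteDimensional ℝ V] {k : ℕ}
    (η : Fin k → (V →ₗ[ℝ] ℝ)) (ω : Fin k → (V →ₗ[ℝ] V →ₗ[ℝ] ℝ))
    (h : IsKContactStruct η ω) (R : Fin k → V)
    (hR1 : ∀ α β, η α (R β) = if α = β then 1 else 0)
    (hR2 : ∀ α β (w : V), ω α (R β) w = 0)
    (T : Submodule ℝ V) (hT : ∀ β, R β ∈ T) :
    Submodule.map T.subtype (reducedD η ω T)
        = T ⊓ kOrth ω T ⊓ ⨅ α, LinearMap.ker (η α) ∧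
    ∃ (ηQ : Fin k → ((↥T ⧸ reducedD η ω T) →ₗ[ℝ] ℝ))
      (ωQ : Fin k → ((↥T ⧸ reducedD η ω T) →ₗ[ℝ] (↥T ⧸ reducedD η ω T) →ₗ[ℝ] ℝ)),
      (∀ α (t : T), ηQ α (Submodule.Quotient.mk t) = η α (t : V)) ∧
      (∀ α (t t' : T),
        ωQ α (Submodule.Quotient.mk t) (Submodule.Quotient.mk t') = ω α (t : V) (t' : V)) ∧
      IsKContactStruct ηQ ωQ ∧
      (∀ α β, ηQ α (Submodule.Quotient.mk ⟨R β, hT β⟩) = if α = β then 1 else 0) ∧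
      (∀ α β (q : ↥T ⧸ reducedD η ω T),
        ωQ α (Submodule.Quotient.mk ⟨R β, hT β⟩) q = 0) := by
  obtain ⟨halt, hdim1, hdim2, hinf⟩ := h
  have hskew : ∀ α (x y : V), ω α x y = - ω α y x := fun α => alt_skew (ω α) (halt α)
  set D := reducedD η ω T with hDdef
  have hmemD : ∀ t : T, t ∈ D ↔ (∀ α, η α (t : V) = 0) ∧ ∀ α (t' : T), ω α (t : V) (t' : V) = 0 := by
    intro t
    simp only [hDdef, reducedD, Submodule.mem_inf, Submodule.mem_iInf, LinearMap.mem_ker,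
      LinearMap.coe_comp, Function.comp_apply, Submodule.coe_subtype]
    constructor
    · rintro ⟨h1, h2⟩
      refine ⟨h1, fun α t' => ?_⟩
      have := h2 α
      have := congrArg (fun f => f t') this
      simpa using this
    · rintro ⟨h1, h2⟩
      refine ⟨h1, fun α => ?_⟩
      ext t'
      simpa using h2 α t'
  -- Part 1
  have part1 : Submodule.map T.subtype D = T ⊓ kOrth ω T ⊓ ⨅ α, LinearMap.ker (η α) := by
    ext v
    simp only [Submodule.mem_map, Submodule.mem_inf, Submodule.mem_iInf, LinearMap.mem_ker,
      Submodule.coe_subtype, mem_kOrth]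
    constructor
    · rintro ⟨t, htD, rfl⟩
      rw [hmemD] at htD
      refine ⟨⟨t.2, fun w hw α => ?_⟩, fun α => htD.1 α⟩
      rw [hskew α w t, htD.2 α ⟨w, hw⟩, neg_zero]
    · rintro ⟨⟨hvT, hvO⟩, hvη⟩
      refine ⟨⟨v, hvT⟩, (hmemD _).2 ⟨hvη, fun α t' => ?_⟩, rfl⟩
      rw [hskew α v t', hvO (t' : V) t'.2 α, neg_zero]
  refine ⟨part1, ?_⟩
  -- construct ηQ
  have hDle1 : ∀ α, D ≤ LinearMap.ker ((η α).comp T.subtype) :=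
    fun α => le_trans inf_le_left (iInf_le _ α)
  set ηQ : Fin k → ((↥T ⧸ D) →ₗ[ℝ] ℝ) :=
    fun α => D.liftQ ((η α).comp T.subtype) (hDle1 α) with hηQdef
  have hηQmk : ∀ α (t : T), ηQ α (Submodule.Quotient.mk t) = η α (t : V) := by
    intro α t; simp [hηQdef]
  -- construct ωQ
  have hDle2 : ∀ α, D ≤ LinearMap.ker ((ω α).compl₁₂ T.subtype T.subtype) :=
    fun α => le_trans inf_le_right (iInf_le _ α)
  set s1 : Fin k → ((↥T ⧸ D) →ₗ[ℝ] ↥T →ₗ[ℝ] ℝ) :=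
    fun α => D.liftQ ((ω α).compl₁₂ T.subtype T.subtype) (hDle2 α) with hs1def
  have hs1mk : ∀ α (t t' : T), s1 α (Submodule.Quotient.mk t) t' = ω α (t : V) (t' : V) := by
    intro α t t'; simp [hs1def]
  have hDle3 : ∀ α, D ≤ LinearMap.ker (s1 α).flip := by
    intro α t' ht'
    rw [LinearMap.mem_ker]
    refine LinearMap.ext fun q => ?_
    obtain ⟨t, rfl⟩ := Submodule.Quotient.mk_surjective D q
    simp only [LinearMap.flip_apply, LinearMap.zero_apply, hs1mk]
    rw [hskew α]
    rw [((hmemD t').1 ht').2 α t, neg_zero]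
  set ωQ : Fin k → ((↥T ⧸ D) →ₗ[ℝ] (↥T ⧸ D) →ₗ[ℝ] ℝ) :=
    fun α => (D.liftQ (s1 α).flip (hDle3 α)).flip with hωQdef
  have hωQmk : ∀ α (t t' : T), ωQ α (Submodule.Quotient.mk t) (Submodule.Quotient.mk t')
      = ω α (t : V) (t' : V) := by
    intro α t t'
    simp [hωQdef, hs1mk]
  refine ⟨ηQ, ωQ, hηQmk, hωQmk, ?_, ?_, ?_⟩
  · -- IsKContactStruct
    have hηQR : ∀ α β, ηQ α (Submodule.Quotient.mk ⟨R β, hT β⟩) = if α = β then 1 else 0 := by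
      intro α β; rw [hηQmk]; exact hR1 α β
    have hωQR : ∀ α β (q : ↥T ⧸ D), ωQ α (Submodule.Quotient.mk ⟨R β, hT β⟩) q = 0 := by
      intro α β q
      obtain ⟨t, rfl⟩ := Submodule.Quotient.mk_surjective D q
      rw [hωQmk]; exact hR2 α β t
    -- the joint condition (4)
    have hQinf : (⨅ α, LinearMap.ker (ηQ α)) ⊓ (⨅ α, LinearMap.ker (ωQ α)) = ⊥ := by
      rw [eq_bot_iff]
      rintro q hq
      rw [Submodule.mem_inf] at hq
      obtain ⟨hq1, hq2⟩ := hq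
      simp only [Submodule.mem_iInf, LinearMap.mem_ker] at hq1 hq2
      obtain ⟨t, rfl⟩ := Submodule.Quotient.mk_surjective D q
      rw [Submodule.mem_bot, Submodule.Quotient.mk_eq_zero]
      refine (hmemD t).2 ⟨fun α => by rw [← hηQmk]; exact hq1 α, fun α t' => ?_⟩
      rw [← hωQmk]
      have := congrArg (fun f => f (Submodule.Quotient.mk t' : ↥T ⧸ D)) (hq2 α)
      simpa using this
    -- the map L
    set L : (↥T ⧸ D) →ₗ[ℝ] (Fin k → ℝ) := LinearMap.pi (fun α => ηQ α) with hLdef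
    have hLker : LinearMap.ker L = ⨅ α, LinearMap.ker (ηQ α) := LinearMap.ker_pi _
    have hLsum : ∀ c : Fin k → ℝ,
        L (∑ β, c β • Submodule.Quotient.mk ⟨R β, hT β⟩) = c := by
      intro c
      funext α
      rw [hLdef]
      simp only [LinearMap.pi_apply, map_sum, map_smul, hηQR, smul_eq_mul]
      simp [Finset.sum_ite_eq', mul_comm]
    have hLsurj : Function.Surjective L := by
      intro c
      exact ⟨∑ β, c β • Submodule.Quotient.mk ⟨R β, hT β⟩, hLsum c⟩
    refine ⟨?_, ?_, ?_, hQinf⟩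
    · intro α q
      obtain ⟨t, rfl⟩ := Submodule.Quotient.mk_surjective D q
      rw [hωQmk]; exact halt α t
    · -- codimension of ⨅ ker ηQ is k
      have := LinearMap.finrank_range_add_finrank_ker L
      rw [hLker, LinearMap.range_eq_top.2 hLsurj, finrank_top] at this
      rw [Module.finrank_fin_fun ℝ] at this
      omega
    · -- radical has dimension k
      set K' : Submodule ℝ (↥T ⧸ D) := ⨅ α, LinearMap.ker (ωQ α) with hK'def
      have hinj : Function.Injective (L.domRestrict K') := by
        rw [← LinearMap.ker_eq_bot, eq_bot_iff]
        rintro ⟨x, hxK⟩ hx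
        rw [LinearMap.mem_ker, LinearMap.domRestrict_apply] at hx
        rw [Submodule.mem_bot, Submodule.mk_eq_zero]
        have hx1 : x ∈ ⨅ α, LinearMap.ker (ηQ α) := by
          rw [← hLker]; exact hx
        have : x ∈ (⨅ α, LinearMap.ker (ηQ α)) ⊓ (⨅ α, LinearMap.ker (ωQ α)) := ⟨hx1, hxK⟩
        rw [hQinf, Submodule.mem_bot] at this
        exact this
      have hsurj : Function.Surjective (L.domRestrict K') := by
        intro c
        refine ⟨⟨∑ β, c β • Submodule.Quotient.mk ⟨R β, hT β⟩, ?_⟩, ?_⟩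
        · rw [hK'def]
          simp only [Submodule.mem_iInf, LinearMap.mem_ker]
          intro α
          rw [map_sum]
          refine LinearMap.ext fun q => ?_
          simp only [LinearMap.sum_apply, LinearMap.zero_apply, map_smul,
            LinearMap.smul_apply, hωQR, smul_zero]
          exact Finset.sum_const_zero
        · rw [LinearMap.domRestrict_apply]
          exact hLsum c
      have e : K' ≃ₗ[ℝ] (Fin k → ℝ) := LinearEquiv.ofBijective (L.domRestrict K') ⟨hinj, hsurj⟩
      rw [e.finrank_eq, Module.finrank_fin_fun ℝ]
  · intro α β; rw [hηQmk]; exact hR1 α β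
  · intro α β q
    obtain ⟨t, rfl⟩ := Submodule.Quotient.mk_surjective D q
    rw [hωQmk]; exact hR2 α β t
end

section
/- Let V = ℝ⁴ with standard dual basis e_1*, e_2*, e_3*, e_4*, and set η_1 := e_1*, η_2 := e_2*, ψ_1(u,v) := u_3v_4 − u_4v_3, ψ_2(u,v) := u_2v_1 − u_1v_2. Define alternating bilinear forms Ω_α on ℝ × ℝ⁴ by Ω_α((a,u),(b,v)) := a·η_α(v) − b·η_α(u) + ψ_α(u,v). Then ⋂_{α=1}^2 rad Ω_α = 0 (so the ℝ²-valued two-form (Ω_1, Ω_2) is 2-symplectic), yet ⋂_{α=1}^2 rad ψ_α = 0 is zero-dimensional rather than 2-dimensional; in particular there exist no vectors R_1, R_2 ∈ ℝ⁴ with η_α(R_β) = δ_{αβ} and ψ_α(R_β,·) = 0, so (η_1, η_2; ψ_1, ψ_2) is not a 2-contact structure on ℝ⁴. -/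
open Module

/-- **The paper's counterexample to symplectisation without lifted Reeb vectors.**
On `V = ℝ⁴` take `η₁ = e₁*`, `η₂ = e₂*`, `ψ₁(u,v) = u₃v₄ − u₄v₃`,
`ψ₂(u,v) = u₂v₁ − u₁v₂`, and on `ℝ × ℝ⁴` set
`Ω α ((a,u),(b,v)) = a·η α v − b·η α u + ψ α (u,v)`.  Then `⋂ rad (Ω α) = 0`
(so `(Ω₁, Ω₂)` is `2`-symplectic), yet `⋂ rad (ψ α) = 0` is zero- rather than
two-dimensional; in particular no Reeb vectors exist and `(η; ψ)` is not a
`2`-contact structure on `ℝ⁴`. -/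
theorem two_symplectic_extension_not_two_contact
    (η : Fin 2 → ((Fin 4 → ℝ) →ₗ[ℝ] ℝ))
    (ψ : Fin 2 → ((Fin 4 → ℝ) →ₗ[ℝ] (Fin 4 → ℝ) →ₗ[ℝ] ℝ))
    (Ω : Fin 2 → ((ℝ × (Fin 4 → ℝ)) →ₗ[ℝ] (ℝ × (Fin 4 → ℝ)) →ₗ[ℝ] ℝ))
    (hη0 : ∀ u, η 0 u = u 0) (hη1 : ∀ u, η 1 u = u 1)
    (hψ0 : ∀ u v, ψ 0 u v = u 2 * v 3 - u 3 * v 2)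
    (hψ1 : ∀ u v, ψ 1 u v = u 1 * v 0 - u 0 * v 1)
    (hΩ : ∀ (α : Fin 2) (a : ℝ) (u : Fin 4 → ℝ) (b : ℝ) (v : Fin 4 → ℝ),
      Ω α (a, u) (b, v) = a * η α v - b * η α u + ψ α u v) :
    (⨅ α, LinearMap.ker (Ω α)) = ⊥ ∧
    (⨅ α, LinearMap.ker (ψ α)) = ⊥ ∧
    (¬ ∃ R : Fin 2 → (Fin 4 → ℝ),
      (∀ α β, η α (R β) = if α = β then 1 else 0) ∧
      (∀ α β (w : Fin 4 → ℝ), ψ α (R β) w = 0)) ∧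
    ¬ IsKContactStruct η ψ := by
  have hkψ : (⨅ α, LinearMap.ker (ψ α)) = ⊥ := by
    rw [eq_bot_iff]
    intro u hu
    simp only [Submodule.mem_iInf, LinearMap.mem_ker] at hu
    have h0 := fun v => LinearMap.congr_fun (hu 0) v
    have h1 := fun v => LinearMap.congr_fun (hu 1) v
    simp only [hψ0, hψ1, LinearMap.zero_apply] at h0 h1
    have e2 := h0 (Pi.single 3 1)
    have e3 := h0 (Pi.single 2 1)
    have e1 := h1 (Pi.single 0 1)
    have e0 := h1 (Pi.single 1 1)
    simp [Pi.single_apply] at e0 e1 e2 e3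
    simp only [Submodule.mem_bot]
    funext i
    fin_cases i <;> simpa using (by assumption : _)
  refine ⟨?_, hkψ, ?_, ?_⟩
  · rw [eq_bot_iff]
    intro x hx
    obtain ⟨a, u⟩ := x
    simp only [Submodule.mem_iInf, LinearMap.mem_ker] at hx
    have h0 := fun p => LinearMap.congr_fun (hx 0) p
    have h1 := fun p => LinearMap.congr_fun (hx 1) p
    have H0 : ∀ b v, a * η 0 v - b * η 0 u + ψ 0 u v = 0 := by
      intro b v; have := h0 (b, v); rwa [hΩ] at this
    have H1 : ∀ b v, a * η 1 v - b * η 1 u + ψ 1 u v = 0 := by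
      intro b v; have := h1 (b, v); rwa [hΩ] at this
    simp only [hη0, hη1, hψ0, hψ1] at H0 H1
    have ea := H0 0 (Pi.single 0 1)
    have e0 := H0 1 0
    have e2 := H0 0 (Pi.single 3 1)
    have e3 := H0 0 (Pi.single 2 1)
    have e1 := H1 1 0
    simp [Pi.single_apply] at ea e0 e1 e2 e3
    simp only [Submodule.mem_bot, Prod.mk_eq_zero]
    refine ⟨ea, ?_⟩
    funext i
    fin_cases i <;> simpa using (by assumption : _)
  · rintro ⟨R, hR1, hR2⟩
    have h1 := hR2 1 0 (Pi.single 1 1)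
    rw [hψ1] at h1
    have h0 := hR2 1 0 (Pi.single 0 1)
    rw [hψ1] at h0
    have := hR1 0 0
    rw [hη0] at this
    simp [Pi.single_apply] at h0 h1 this
    rw [this] at h1
    simp at h1
  · rintro ⟨_, _, h3, _⟩
    rw [hkψ] at h3
    simp [finrank_bot] at h3
end

section
/- Let 𝔤 be a real Lie algebra and μ : 𝔤 → ℝ a linear functional. Then 𝔨_{[μ]} := {ξ ∈ 𝔤 : μ(ξ) = 0 and there exists λ ∈ ℝ with μ([ξ,ν]) = λ·μ(ν) for all ν ∈ 𝔤} is a Lie subalgebra of 𝔤: it is a linear subspace of 𝔤 closed under the Lie bracket. Moreover, for all ξ, ν ∈ 𝔨_{[μ]} one has μ([[ξ,ν],ζ]) = 0 for every ζ ∈ 𝔤. -/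
/-- `𝔨_{[μ]} = ker μ ∩ 𝔤_{[μ]}`: the set of `ξ` with `μ ξ = 0` such that
`ad*_ξ μ` is proportional to `μ`, i.e. `∃ λ, μ ⁅ξ, ν⁆ = λ · μ ν` for all `ν`. -/
def kRaySet {L : Type*} [LieRing L] [LieAlgebra ℝ L] (μ : L →ₗ[ℝ] ℝ) : Set L :=
  {ξ | μ ξ = 0 ∧ ∃ l : ℝ, ∀ ν : L, μ ⁅ξ, ν⁆ = l * μ ν}

lemma kRaySet_key {L : Type*} [LieRing L] [LieAlgebra ℝ L] (μ : L →ₗ[ℝ] ℝ)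
    {ξ ν : L} (hξ : ξ ∈ kRaySet μ) (hν : ν ∈ kRaySet μ) (ζ : L) :
    μ ⁅⁅ξ, ν⁆, ζ⁆ = 0 := by
  obtain ⟨-, l, hl⟩ := hξ
  obtain ⟨-, m, hm⟩ := hν
  have : ⁅⁅ξ, ν⁆, ζ⁆ = ⁅ξ, ⁅ν, ζ⁆⁆ - ⁅ν, ⁅ξ, ζ⁆⁆ := by
    rw [lie_lie]
  rw [this, map_sub, hl, hm, hm, hl]
  ring

/-- **`𝔨_{[μ]}` is a Lie subalgebra.**  For a real Lie algebra `𝔤` and a linear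
functional `μ : 𝔤 → ℝ`, the set
`𝔨_{[μ]} = {ξ : μ ξ = 0 ∧ ∃ λ, ∀ ν, μ ⁅ξ,ν⁆ = λ · μ ν}` is a Lie subalgebra of `𝔤`
(a linear subspace closed under the bracket); moreover for `ξ, ν ∈ 𝔨_{[μ]}` one has
`μ ⁅⁅ξ,ν⁆, ζ⁆ = 0` for every `ζ ∈ 𝔤`. -/
theorem kRaySet_isLieSubalgebra {L : Type*} [LieRing L] [LieAlgebra ℝ L]
    (μ : L →ₗ[ℝ] ℝ) :
    (∃ S : LieSubalgebra ℝ L, (S : Set L) = kRaySet μ) ∧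
    ∀ ξ ∈ kRaySet μ, ∀ ν ∈ kRaySet μ, ∀ ζ : L, μ ⁅⁅ξ, ν⁆, ζ⁆ = 0 := by
  refine ⟨⟨{ carrier := kRaySet μ
             add_mem' := ?_
             zero_mem' := ?_
             smul_mem' := ?_
             lie_mem' := ?_ }, rfl⟩, fun ξ hξ ν hν ζ => kRaySet_key μ hξ hν ζ⟩
  · rintro a b ⟨ha0, l, hl⟩ ⟨hb0, m, hm⟩
    refine ⟨by simp [ha0, hb0], l + m, fun ζ => ?_⟩
    rw [add_lie, map_add, hl, hm]; ring
  · exact ⟨by simp, 0, fun ζ => by simp⟩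
  · rintro c a ⟨ha0, l, hl⟩
    refine ⟨by simp [ha0], c * l, fun ζ => ?_⟩
    rw [smul_lie, map_smul, hl, smul_eq_mul]; ring
  · rintro a b ha hb
    obtain ⟨ha0, l, hl⟩ := id ha
    obtain ⟨hb0, m, hm⟩ := id hb
    refine ⟨by rw [hl, hb0, mul_zero], 0, fun ζ => ?_⟩
    rw [kRaySet_key μ ha hb ζ, zero_mul]
end
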